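/- Let κ > 2 and let l ≥ 1 be an integer with κ ≠ l(l+1). Define I_l := ∫_{−1}^{1} P_l(y)/√(1 − y²) dy, λ_l := (l(l+1)κ)/((l(l+1) − κ)π)·I_l, and b(x) := P_l(x) + λ_l/(l(l+1)). Then for all x ∈ (−1,1): (1 − x²)b''(x) − 2x b'(x) + l(l+1)·b(x) = (κ/π)∫_{−1}^{1} b(y)/√(1 − y²) dy; that is, b solves the nonlocal Legendre-type equation with parameter α = −l(l+1). -/
import Mathlib


open Real Polynomial MeasureTheory intervalIntegral

/-- The Legendre polynomial `P_n`, defined by the Rodrigues formula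
`P_n = 1/(2ⁿ n!) · dⁿ/dxⁿ (x² − 1)ⁿ`. -/
noncomputable def legendre (n : ℕ) : Polynomial ℝ :=
  ((1 : ℝ) / (2^n * n.factorial)) • (Polynomial.derivative^[n] ((Polynomial.X^2 - 1)^n))

lemma rodrigues_aux (l : ℕ) (hl : 1 ≤ l) :
    ∀ n, n ≤ l →
      ((X:Polynomial ℝ)^2 - 1) * derivative^[n+1] (((X:Polynomial ℝ)^2 - 1)^l)
        = ((2*(l-n) : ℕ) : Polynomial ℝ) * (X * derivative^[n] ((X^2 - 1)^l))
          + ((n*(2*l+1-n) : ℕ) : Polynomial ℝ) * derivative^[n-1] ((X^2 - 1)^l) := by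
  have h2 : derivative ((X:Polynomial ℝ)^2 - 1) = 2 * X := by
    simp [derivative_pow, map_ofNat]
  intro n
  induction n with
  | zero =>
    intro _
    simp only [Function.iterate_one, Function.iterate_zero, id_eq, Nat.sub_zero,
      Nat.zero_sub, Nat.mul_zero, Nat.zero_mul, Nat.cast_zero, zero_mul, add_zero,
      zero_add, pow_zero]
    rw [derivative_pow, h2]
    have hlb : (X^2 - 1 : Polynomial ℝ)^l = (X^2-1)^(l-1) * (X^2-1) := by
      conv_lhs => rw [← Nat.sub_add_cancel hl]
      rw [pow_succ]
    rw [hlb, Polynomial.C_eq_natCast]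
    push_cast
    ring
  | succ m ih =>
    intro hml
    have hm : m ≤ l := Nat.le_of_succ_le hml
    have h := congrArg derivative (ih hm)
    rw [derivative_add, derivative_mul, derivative_mul, derivative_mul, derivative_mul,
      h2, derivative_natCast, derivative_natCast] at h
    simp only [zero_mul, zero_add, derivative_X,
      ← Function.iterate_succ_apply' derivative, Nat.succ_eq_add_one] at h
    have c1 : ((2*(l-m) : ℕ) : Polynomial ℝ) = 2*(l:Polynomial ℝ) - 2*m := by
      rw [Nat.cast_mul, Nat.cast_sub hm]; push_cast; ring
    have c2 : ((m*(2*l+1-m) : ℕ) : Polynomial ℝ) = (m:Polynomial ℝ)*(2*(l:Polynomial ℝ)+1-m) := by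
      rw [Nat.cast_mul, Nat.cast_sub (show m ≤ 2*l+1 by omega)]; push_cast; ring
    have c3 : ((2*(l-(m+1)) : ℕ) : Polynomial ℝ) = 2*(l:Polynomial ℝ) - 2*m - 2 := by
      rw [Nat.cast_mul, Nat.cast_sub hml]; push_cast; ring
    have c4 : (((m+1)*(2*l+1-(m+1)) : ℕ) : Polynomial ℝ)
        = ((m:Polynomial ℝ)+1)*(2*(l:Polynomial ℝ)-m) := by
      rw [Nat.cast_mul, Nat.cast_sub (show m+1 ≤ 2*l+1 by omega)]; push_cast; ring
    simp only [Nat.add_sub_cancel]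
    rw [c3, c4]
    rcases Nat.eq_zero_or_pos m with h0 | h0
    · subst h0
      simp only [Nat.cast_zero, zero_mul, add_zero, Nat.cast_zero] at h c1 ⊢
      rw [c1] at h
      push_cast at h ⊢
      linear_combination h
    · have hdm : derivative^[m-1+1] (((X:Polynomial ℝ) ^ 2 - 1) ^ l)
          = derivative^[m] ((X ^ 2 - 1) ^ l) := by
        rw [Nat.sub_add_cancel h0]
      rw [hdm, c1, c2] at h
      linear_combination h

lemma legendre_ode (l : ℕ) (hl : 1 ≤ l) (x : ℝ) :
    (1 - x^2) * (derivative (derivative (legendre l))).eval x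
      - 2 * x * (derivative (legendre l)).eval x
      + (l:ℝ) * ((l:ℝ)+1) * (legendre l).eval x = 0 := by
  have key := congrArg derivative (rodrigues_aux l hl l le_rfl)
  simp only [derivative_add, derivative_mul, derivative_natCast, derivative_X,
    Nat.sub_self, Nat.mul_zero, Nat.cast_zero, zero_mul, add_zero, zero_add, one_mul,
    ← Function.iterate_succ_apply' derivative, Nat.succ_eq_add_one] at key
  rw [Nat.sub_add_cancel hl] at key
  have h2 : derivative ((X:Polynomial ℝ)^2 - 1) = 2 * X := by
    simp [derivative_pow, map_ofNat]
  rw [h2] at key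
  -- key : 2*X * D^[l+1] f + (X²-1) * D^[l+1+1] f = (l*(2l+1-l)) * D^[l] f
  have hc : ((l*(2*l+1-l) : ℕ) : Polynomial ℝ) = (l:Polynomial ℝ)*((l:Polynomial ℝ)+1) := by
    rw [Nat.cast_mul, Nat.cast_sub (by omega : l ≤ 2*l+1)]; push_cast; ring
  rw [hc] at key
  have hpoly : (1 - (X:Polynomial ℝ)^2) * derivative (derivative (legendre l))
      - 2*X*derivative (legendre l) + ((l:Polynomial ℝ)*((l:Polynomial ℝ)+1)) * legendre l = 0 := by
    unfold legendre
    rw [derivative_smul, derivative_smul]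
    rw [← Function.iterate_succ_apply' derivative, ← Function.iterate_succ_apply' derivative]
    simp only [Nat.succ_eq_add_one, smul_eq_C_mul]
    linear_combination (-(Polynomial.C ((1:ℝ) / (2^l * l.factorial)))) * key
  have := congrArg (Polynomial.eval x) hpoly
  simpa [Polynomial.eval_mul, Polynomial.eval_natCast] using this
open Real MeasureTheory intervalIntegral

lemma half_integrable (g : ℝ → ℝ) (hg : Continuous g) :
    IntervalIntegrable (fun y => g y / Real.sqrt (1 - y^2)) volume 0 1 := by
  obtain ⟨C0, hC0⟩ := (isCompact_Icc (a := (0:ℝ)) (b := 1)).exists_bound_of_continuousOn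
    hg.continuousOn
  set C := max C0 0 with hC
  have hCnn : 0 ≤ C := le_max_right _ _
  have hbd : ∀ y ∈ Set.Icc (0:ℝ) 1, |g y| ≤ C :=
    fun y hy => le_trans (hC0 y hy) (le_max_left _ _)
  have hmaj : IntervalIntegrable (fun y => C * (1 - y) ^ (-(1/2) : ℝ)) volume 0 1 := by
    have h1 : IntervalIntegrable (fun x : ℝ => x ^ (-(1/2) : ℝ)) volume 0 1 :=
      intervalIntegrable_rpow' (by norm_num)
    have h2 := (h1.comp_sub_left 1).symm
    simpa using h2.const_mul C
  apply hmaj.mono_fun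
  · exact (hg.measurable.div ((measurable_const.sub (measurable_id.pow_const 2)).sqrt)
      ).aestronglyMeasurable
  · filter_upwards [ae_restrict_mem measurableSet_uIoc] with y hy
    rw [Set.uIoc_of_le (by norm_num : (0:ℝ) ≤ 1)] at hy
    rcases eq_or_lt_of_le hy.2 with h1 | h1
    · subst h1
      simp [Real.norm_eq_abs]
    · have hy0 : 0 < y := hy.1
      have h1y : 0 < 1 - y := by linarith
      have hsq : Real.sqrt (1 - y) ≤ Real.sqrt (1 - y^2) := by
        apply Real.sqrt_le_sqrt; nlinarith
      have hsqpos : 0 < Real.sqrt (1 - y) := Real.sqrt_pos.mpr h1y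
      have hrw : (1 - y) ^ (-(1/2) : ℝ) = (Real.sqrt (1 - y))⁻¹ := by
        rw [Real.rpow_neg h1y.le, ← Real.sqrt_eq_rpow]
      have hCinv : (0:ℝ) ≤ C * (Real.sqrt (1-y))⁻¹ :=
        mul_nonneg hCnn (inv_nonneg.mpr (Real.sqrt_nonneg _))
      simp only [Real.norm_eq_abs, abs_div, hrw]
      rw [abs_of_nonneg (Real.sqrt_nonneg _), abs_of_nonneg hCinv]
      rw [div_le_iff₀ (lt_of_lt_of_le hsqpos hsq)]
      calc |g y| ≤ C := hbd y ⟨hy0.le, hy.2⟩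
        _ = C * (Real.sqrt (1-y))⁻¹ * Real.sqrt (1-y) := by
            field_simp
        _ ≤ C * (Real.sqrt (1-y))⁻¹ * Real.sqrt (1-y^2) :=
            mul_le_mul_of_nonneg_left hsq hCinv

lemma full_integrable (g : ℝ → ℝ) (hg : Continuous g) :
    IntervalIntegrable (fun y => g y / Real.sqrt (1 - y^2)) volume (-1) 1 := by
  have hleft : IntervalIntegrable (fun y => g y / Real.sqrt (1 - y^2)) volume (-1) 0 := by
    have h := half_integrable (fun t => g (-t)) (hg.comp continuous_neg)
    have h2 := (IntervalIntegrable.iff_comp_neg).mp h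
    simp only [neg_neg, neg_sq, neg_zero] at h2
    exact h2.symm
  exact hleft.trans (half_integrable g hg)

lemma arcsin_integral : ∫ y in (-1:ℝ)..1, 1 / Real.sqrt (1 - y^2) = π := by
  have h := integral_eq_sub_of_hasDerivAt_of_le (f := Real.arcsin)
    (f' := fun y => 1 / Real.sqrt (1 - y^2)) (by norm_num : (-1:ℝ) ≤ 1)
    Real.continuous_arcsin.continuousOn
    (fun x hx => Real.hasDerivAt_arcsin hx.1.ne' hx.2.ne)
    (full_integrable _ continuous_const)
  rw [h, Real.arcsin_one, Real.arcsin_neg_one]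
  ring


/-- For `κ > 2`, `l ≥ 1` with `κ ≠ l(l+1)`, setting
`I_l := ∫_{−1}^{1} P_l(y)/√(1 − y²) dy`, `λ_l := (l(l+1)κ)/((l(l+1) − κ)π)·I_l` and
`b := P_l + λ_l/(l(l+1))`, the function `b` solves the nonlocal Legendre-type equation
with parameter `α = −l(l+1)`:
`(1 − x²)b'' − 2x b' + l(l+1)b = (κ/π)∫_{−1}^{1} b(y)/√(1 − y²) dy` on `(−1,1)`. -/
theorem nonlocal_legendre_mode_solution (κ : ℝ) (hκ : 2 < κ) (l : ℕ) (hl : 1 ≤ l)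
    (hκl : κ ≠ (l:ℝ) * ((l:ℝ) + 1)) :
    let I : ℝ := ∫ y in (-1:ℝ)..1, (legendre l).eval y / Real.sqrt (1 - y^2)
    let lam : ℝ := ((l:ℝ) * ((l:ℝ) + 1) * κ) / (((l:ℝ) * ((l:ℝ) + 1) - κ) * π) * I
    let b : ℝ → ℝ := fun x => (legendre l).eval x + lam / ((l:ℝ) * ((l:ℝ) + 1))
    ∀ x ∈ Set.Ioo (-1:ℝ) 1,
      (1 - x^2) * deriv (deriv b) x - 2 * x * deriv b x + (l:ℝ) * ((l:ℝ) + 1) * b x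
        = (κ/π) * ∫ y in (-1:ℝ)..1, b y / Real.sqrt (1 - y^2) := by
  intro I lam b x hx
  have hl0 : (0:ℝ) < (l:ℝ) := by exact_mod_cast hl
  have hL : ((l:ℝ) * ((l:ℝ) + 1)) ≠ 0 := by positivity
  have hπ : (π:ℝ) ≠ 0 := Real.pi_ne_zero
  have hLκ : ((l:ℝ) * ((l:ℝ) + 1) - κ) ≠ 0 := sub_ne_zero.mpr (Ne.symm hκl)
  -- derivatives of b
  have hb' : deriv b = fun t => ((legendre l).derivative).eval t := by
    funext t
    exact ((((legendre l).hasDerivAt t).add_const (lam / ((l:ℝ) * ((l:ℝ) + 1)))).deriv)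
  have hb'' : deriv (deriv b) x = ((legendre l).derivative.derivative).eval x := by
    rw [hb']; exact Polynomial.deriv _
  -- LHS = lam
  have hLHS : (1 - x^2) * deriv (deriv b) x - 2 * x * deriv b x
      + (l:ℝ) * ((l:ℝ) + 1) * b x = lam := by
    rw [hb'', hb']
    have hode := legendre_ode l hl x
    have hbx : b x = (legendre l).eval x + lam / ((l:ℝ) * ((l:ℝ) + 1)) := rfl
    rw [hbx]
    have : (l:ℝ) * ((l:ℝ) + 1) * (lam / ((l:ℝ) * ((l:ℝ) + 1))) = lam := by
      field_simp
    linear_combination hode + this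
  rw [hLHS]
  -- RHS computation
  have hsplit : (∫ y in (-1:ℝ)..1, b y / Real.sqrt (1 - y^2))
      = I + lam / ((l:ℝ) * ((l:ℝ) + 1)) * π := by
    have hre : (fun y => b y / Real.sqrt (1 - y^2))
        = fun y => (legendre l).eval y / Real.sqrt (1 - y^2)
          + (lam / ((l:ℝ) * ((l:ℝ) + 1))) * (1 / Real.sqrt (1 - y^2)) := by
      funext y
      show ((legendre l).eval y + lam / ((l:ℝ) * ((l:ℝ) + 1))) / Real.sqrt (1 - y^2) = _
      rw [add_div, mul_one_div]
    rw [hre, intervalIntegral.integral_add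
      (full_integrable _ (legendre l).continuous)
      (((full_integrable (fun _ => (1:ℝ)) continuous_const).const_mul _))]
    have h1 : (∫ y in (-1:ℝ)..1, (lam / ((l:ℝ) * ((l:ℝ) + 1))) * (1 / Real.sqrt (1 - y^2)))
        = lam / ((l:ℝ) * ((l:ℝ) + 1)) * π := by
      rw [intervalIntegral.integral_const_mul, arcsin_integral]
    rw [h1]
  rw [hsplit]
  -- final algebra
  have hlam : lam = ((l:ℝ) * ((l:ℝ) + 1) * κ) / (((l:ℝ) * ((l:ℝ) + 1) - κ) * π) * I := rfl
  rw [hlam]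
  field_simp
  ring
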